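/- Let f : ℝ → ℝ be the inverse of h. Then f(v)²/(2v) → 1 as v → +∞; that is, f(v) behaves like √(2v) for v large. -/

import Mathlib

open Filter

/-- The change of variables `h(u) = (1/2)·u·√(1+u²) + (1/2)·log(u + √(1+u²))`. -/
noncomputable def h (u : ℝ) : ℝ :=
  (1 / 2) * u * Real.sqrt (1 + u ^ 2) + (1 / 2) * Real.log (u + Real.sqrt (1 + u ^ 2))

lemma sqrt_pos' (u : ℝ) : 0 < Real.sqrt (1 + u ^ 2) := by
  apply Real.sqrt_pos.2; nlinarith [sq_nonneg u]

lemma sqrt_sq' (u : ℝ) : Real.sqrt (1 + u ^ 2) ^ 2 = 1 + u ^ 2 :=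
  Real.sq_sqrt (by nlinarith [sq_nonneg u])

lemma arg_pos (u : ℝ) : 0 < u + Real.sqrt (1 + u ^ 2) := by
  have h1 := sqrt_pos' u
  have h2 := sqrt_sq' u
  nlinarith [sq_nonneg (u + Real.sqrt (1 + u ^ 2))]

lemma h_hasDeriv (u : ℝ) : HasDerivAt h (Real.sqrt (1 + u ^ 2)) u := by
  have hs := sqrt_pos' u
  have hs2 := sqrt_sq' u
  have ha := arg_pos u
  have d1 : HasDerivAt (fun x : ℝ => 1 + x ^ 2) (2 * u) u := by
    simpa using ((hasDerivAt_pow 2 u).const_add 1)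
  have d2 : HasDerivAt (fun x : ℝ => Real.sqrt (1 + x ^ 2))
      (u / Real.sqrt (1 + u ^ 2)) u := by
    have := (Real.hasDerivAt_sqrt (by positivity : (1 + u ^ 2) ≠ 0)).comp u d1
    refine this.congr_deriv ?_
    field_simp
  have d3 : HasDerivAt (fun x : ℝ => (1 / 2) * x * Real.sqrt (1 + x ^ 2))
      ((1 / 2) * (1 * Real.sqrt (1 + u ^ 2) + u * (u / Real.sqrt (1 + u ^ 2)))) u := by
    have := ((hasDerivAt_id u).mul d2).const_mul (1 / 2 : ℝ)
    have e : (fun x : ℝ => (1 / 2) * x * Real.sqrt (1 + x ^ 2)) =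
        fun y => 1 / 2 * ((id : ℝ → ℝ) * fun x : ℝ => Real.sqrt (1 + x ^ 2)) y := by
      funext x; simp only [Pi.mul_apply, id]; ring
    rw [e]; exact this.congr_deriv rfl
  have d4 : HasDerivAt (fun x : ℝ => (1 / 2) * Real.log (x + Real.sqrt (1 + x ^ 2)))
      ((1 / 2) * ((1 + u / Real.sqrt (1 + u ^ 2)) / (u + Real.sqrt (1 + u ^ 2)))) u := by
    have dlog := (Real.hasDerivAt_log ha.ne').comp u ((hasDerivAt_id u).add d2)
    have := dlog.const_mul (1 / 2 : ℝ)
    refine this.congr_deriv ?_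
    field_simp
  have := d3.add d4
  refine this.congr_deriv ?_
  set s := Real.sqrt (1 + u ^ 2)
  have hss : s * s = 1 + u ^ 2 := by nlinarith [hs2]
  field_simp
  linear_combination (-(s + u)) * hss

lemma h_strictMono : StrictMono h :=
  strictMono_of_deriv_pos fun u => by
    rw [(h_hasDeriv u).deriv]; exact sqrt_pos' u

lemma f_tendsto (f : ℝ → ℝ) (hf₂ : Function.RightInverse f h) :
    Tendsto f atTop atTop := by
  rw [tendsto_atTop]
  intro b
  filter_upwards [eventually_ge_atTop (h b + 1)] with v hv
  by_contra hlt
  push_neg at hlt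
  have hm := h_strictMono hlt
  rw [hf₂ v] at hm
  linarith

lemma ratio_tendsto : Tendsto (fun u : ℝ => 2 * h u / u ^ 2) atTop (nhds 1) := by
  have t1 : Tendsto (fun u : ℝ => Real.sqrt (1 + u ^ 2) / u) atTop (nhds 1) := by
    have hpow : Tendsto (fun u : ℝ => u ^ 2) atTop atTop :=
      tendsto_pow_atTop (by norm_num)
    have hinv : Tendsto (fun u : ℝ => 1 / u ^ 2) atTop (nhds 0) := by
      simpa [one_div, Pi.inv_def] using hpow.inv_tendsto_atTop
    have base : Tendsto (fun u : ℝ => 1 / u ^ 2 + 1) atTop (nhds (0 + 1)) :=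
      hinv.add tendsto_const_nhds
    have sq : Tendsto (fun u : ℝ => Real.sqrt (1 / u ^ 2 + 1)) atTop (nhds 1) := by
      have := (Real.continuous_sqrt.tendsto (0 + 1)).comp base
      simpa [Function.comp_def] using this
    apply sq.congr'
    filter_upwards [eventually_gt_atTop (0 : ℝ)] with u hu
    rw [show (1 : ℝ) / u ^ 2 + 1 = (1 + u ^ 2) / u ^ 2 by field_simp,
      Real.sqrt_div (by positivity), Real.sqrt_sq hu.le]
  have t2 : Tendsto (fun u : ℝ => Real.log (u + Real.sqrt (1 + u ^ 2)) / u ^ 2)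
      atTop (nhds 0) := by
    have upper : Tendsto (fun u : ℝ => (2 * u + 1) / u ^ 2) atTop (nhds 0) := by
      have ha1 : Tendsto (fun u : ℝ => 2 / u) atTop (nhds 0) := by
        simpa using tendsto_const_nhds.div_atTop (tendsto_id (α := ℝ))
      have hpow : Tendsto (fun u : ℝ => u ^ 2) atTop atTop :=
        tendsto_pow_atTop (by norm_num)
      have ha2 : Tendsto (fun u : ℝ => 1 / u ^ 2) atTop (nhds 0) := by
        simpa [one_div, Pi.inv_def] using hpow.inv_tendsto_atTop
      have h1 : Tendsto (fun u : ℝ => 2 / u + 1 / u ^ 2) atTop (nhds (0 + 0)) :=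
        ha1.add ha2
      rw [show (0 : ℝ) + 0 = 0 by ring] at h1
      apply h1.congr'
      filter_upwards [eventually_gt_atTop (0 : ℝ)] with u hu
      field_simp
    apply tendsto_of_tendsto_of_tendsto_of_le_of_le' tendsto_const_nhds upper
    · filter_upwards [eventually_gt_atTop (0 : ℝ)] with u hu
      apply div_nonneg _ (by positivity)
      apply Real.log_nonneg
      have : (1 : ℝ) ≤ Real.sqrt (1 + u ^ 2) := by
        nlinarith [sqrt_sq' u, sqrt_pos' u, sq_nonneg u]
      linarith
    · filter_upwards [eventually_gt_atTop (0 : ℝ)] with u hu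
      apply div_le_div_of_nonneg_right _ (by positivity)
      have hle : Real.sqrt (1 + u ^ 2) ≤ 1 + u := by
        rw [show (1 : ℝ) + u = Real.sqrt ((1 + u) ^ 2) by
          rw [Real.sqrt_sq (by linarith)]]
        exact Real.sqrt_le_sqrt (by nlinarith)
      calc Real.log (u + Real.sqrt (1 + u ^ 2)) ≤ u + Real.sqrt (1 + u ^ 2) - 1 :=
            Real.log_le_sub_one_of_pos (arg_pos u)
        _ ≤ 2 * u + 1 := by linarith
  have := t1.add t2
  rw [show (1 : ℝ) + 0 = 1 by ring] at this
  apply this.congr'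
  filter_upwards [eventually_gt_atTop (0 : ℝ)] with u hu
  have hs := sqrt_pos' u
  rw [h]
  field_simp

theorem stmt_7 (f : ℝ → ℝ) (hf₁ : Function.LeftInverse f h)
    (hf₂ : Function.RightInverse f h) :
    Tendsto (fun v : ℝ => f v ^ 2 / (2 * v)) atTop (nhds 1) := by
  have hft := f_tendsto f hf₂
  have inv_t : Tendsto (fun u : ℝ => u ^ 2 / (2 * h u)) atTop (nhds 1) := by
    have := ratio_tendsto.inv₀ one_ne_zero
    simpa [inv_div] using this
  have hc := inv_t.comp hft
  apply hc.congr
  intro v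
  simp [Function.comp, hf₂ v]
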